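/- Let G be a finite K_{1,1,3}-free series-parallel graph with SPQ-tree T, and let μ be a P-node of T whose pertinent graph G_μ contains the edge st between its terminals. Then no child of μ is an S-node of Type B, and at most two children of μ are S-nodes of Type C. -/

import Mathlib

open Set

/-! ### `K_{1,1,3}` and `K_{1,1,3}`-freeness -/

/-- The complete tripartite graph `K_{1,1,3}`: vertices `0, 1` are the two adjacent
vertices, and `2, 3, 4` are pairwise non-adjacent, each adjacent to `0` and `1`. -/
def K113 : SimpleGraph (Fin 5) where
  Adj u v := u ≠ v ∧ ((u : ℕ) < 2 ∨ (v : ℕ) < 2)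
  symm := ⟨fun u v h => ⟨h.1.symm, h.2.symm⟩⟩
  loopless := ⟨fun u h => h.1 rfl⟩

/-- `G` contains no subgraph isomorphic to `K_{1,1,3}`. -/
def K113Free {V : Type} (G : SimpleGraph V) : Prop :=
  ¬ ∃ f : Fin 5 → V, Function.Injective f ∧ ∀ u v, K113.Adj u v → G.Adj (f u) (f v)

/-! ### SPQ-trees of two-terminal series-parallel graphs -/

mutual
/-- A (canonical) SPQ decomposition tree over the vertex type `V`.  Each node stores
its source and its target. -/
inductive SPQ (V : Type) : Type where
  | Q : V → V → SPQ V
  | S : V → V → SPQList V → SPQ V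
  | P : V → V → SPQList V → SPQ V
inductive SPQList (V : Type) : Type where
  | nil : SPQList V
  | cons : SPQ V → SPQList V → SPQList V
end

namespace SPQList
def toList {V : Type} : SPQList V → List (SPQ V)
  | .nil => []
  | .cons c cs => c :: cs.toList
end SPQList

namespace SPQ

def src {V : Type} : SPQ V → V
  | .Q s _ => s
  | .S s _ _ => s
  | .P s _ _ => s

def tgt {V : Type} : SPQ V → V
  | .Q _ t => t
  | .S _ t _ => t
  | .P _ t _ => t

def isQ {V : Type} : SPQ V → Prop
  | .Q _ _ => True
  | _ => False

def isS {V : Type} : SPQ V → Prop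
  | .S _ _ _ => True
  | _ => False

def isP {V : Type} : SPQ V → Prop
  | .P _ _ _ => True
  | _ => False

def children {V : Type} : SPQ V → List (SPQ V)
  | .Q _ _ => []
  | .S _ _ cs => cs.toList
  | .P _ _ cs => cs.toList

end SPQ

mutual
/-- The vertex set of the pertinent graph of an SPQ node. -/
def SPQ.vertSet {V : Type} : SPQ V → Set V
  | .Q s t => {s, t}
  | .S s t cs => {s, t} ∪ SPQList.vertSetL cs
  | .P s t cs => {s, t} ∪ SPQList.vertSetL cs
def SPQList.vertSetL {V : Type} : SPQList V → Set V
  | .nil => ∅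
  | .cons c cs => SPQ.vertSet c ∪ SPQList.vertSetL cs
end

mutual
/-- The (one-directional) adjacency of the pertinent graph of an SPQ node. -/
def SPQ.adjRel {V : Type} : SPQ V → V → V → Prop
  | .Q s t, u, v => u = s ∧ v = t
  | .S _ _ cs, u, v => SPQList.adjRelL cs u v
  | .P _ _ cs, u, v => SPQList.adjRelL cs u v
def SPQList.adjRelL {V : Type} : SPQList V → V → V → Prop
  | .nil, _, _ => False
  | .cons c cs, u, v => SPQ.adjRel c u v ∨ SPQList.adjRelL cs u v
end

/-- The pertinent graph `G_μ` of an SPQ node `μ`, as a simple graph on the ambient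
vertex type (vertices outside `μ.vertSet` are isolated). -/
def SPQ.pertinentGraph {V : Type} (μ : SPQ V) : SimpleGraph V where
  Adj u v := u ≠ v ∧ (μ.adjRel u v ∨ μ.adjRel v u)
  symm := ⟨fun _ _ h => ⟨h.1.symm, h.2.symm⟩⟩
  loopless := ⟨fun _ h => h.1 rfl⟩

/-- The pertinent graph of `μ` contains the edge between the two terminals of `μ`. -/
def SPQ.hasTermEdge {V : Type} (μ : SPQ V) : Prop :=
  μ.pertinentGraph.Adj μ.src μ.tgt

/-- `chainFrom t s l`: the list `l` of SPQ nodes forms a series chain from the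
terminal `t` to the terminal `s` (the node listed first is incident to `t`). -/
def SPQ.chainFrom {V : Type} (t s : V) : List (SPQ V) → Prop
  | [] => False
  | [c] => SPQ.tgt c = t ∧ SPQ.src c = s
  | c :: c' :: rest => SPQ.tgt c = t ∧ SPQ.chainFrom (SPQ.src c) s (c' :: rest)

/-- Vertex sets of the members of a series chain meet only in the shared terminals of
consecutive members. -/
def SPQ.seriesPairwise {V : Type} (l : List (SPQ V)) : Prop :=
  ∀ i j : Fin l.length, (i : ℕ) < (j : ℕ) →
    (l.get i).vertSet ∩ (l.get j).vertSet ⊆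
      (if (j : ℕ) = (i : ℕ) + 1 then {(l.get i).src} else (∅ : Set V))

mutual
/-- Well-formedness of an SPQ tree: it encodes a genuine (canonical) SPQ
decomposition of a two-terminal series-parallel graph. -/
def SPQ.WF {V : Type} : SPQ V → Prop
  | .Q s t => s ≠ t
  | .S s t cs =>
      s ≠ t ∧ 2 ≤ cs.toList.length ∧ SPQList.WFL cs ∧
      (∀ c ∈ cs.toList, SPQ.isP c ∨ SPQ.isQ c) ∧
      SPQ.chainFrom t s cs.toList ∧ SPQ.seriesPairwise cs.toList
  | .P s t cs =>
      s ≠ t ∧ 2 ≤ cs.toList.length ∧ SPQList.WFL cs ∧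
      (∀ c ∈ cs.toList, SPQ.isS c ∨ SPQ.isQ c) ∧
      (∀ c ∈ cs.toList, SPQ.src c = s ∧ SPQ.tgt c = t) ∧
      (∀ i j : Fin cs.toList.length, (i : ℕ) < (j : ℕ) →
        (cs.toList.get i).vertSet ∩ (cs.toList.get j).vertSet ⊆ ({s, t} : Set V)) ∧
      (∀ i j : Fin cs.toList.length,
        SPQ.isQ (cs.toList.get i) → SPQ.isQ (cs.toList.get j) → i = j)
def SPQList.WFL {V : Type} : SPQList V → Prop
  | .nil => True
  | .cons c cs => SPQ.WF c ∧ SPQList.WFL cs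
end

mutual
/-- `ν` is a node of the SPQ tree rooted at the given node. -/
def SPQ.MemTree {V : Type} (ν : SPQ V) : SPQ V → Prop
  | .Q s t => ν = .Q s t
  | .S s t cs => ν = .S s t cs ∨ SPQList.MemTreeL ν cs
  | .P s t cs => ν = .P s t cs ∨ SPQList.MemTreeL ν cs
def SPQList.MemTreeL {V : Type} (ν : SPQ V) : SPQList V → Prop
  | .nil => False
  | .cons c cs => SPQ.MemTree ν c ∨ SPQList.MemTreeL ν cs
end

/-- At most two entries of `l` satisfy `Pr`. -/
def AtMostTwoOn {α : Type} (Pr : α → Prop) (l : List α) : Prop :=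
  ∀ i j k : Fin l.length, Pr (l.get i) → Pr (l.get j) → Pr (l.get k) →
    i = j ∨ i = k ∨ j = k

/-- Exactly two entries of `l` satisfy `Pr`. -/
def ExactlyTwoOn {α : Type} (Pr : α → Prop) (l : List α) : Prop :=
  ∃ i j : Fin l.length, i ≠ j ∧ Pr (l.get i) ∧ Pr (l.get j) ∧
    ∀ k : Fin l.length, Pr (l.get k) → k = i ∨ k = j

/-- Exactly one entry of `l` satisfies `Pr`. -/
def ExactlyOneOn {α : Type} (Pr : α → Prop) (l : List α) : Prop :=
  ∃ i : Fin l.length, Pr (l.get i) ∧ ∀ k : Fin l.length, Pr (l.get k) → k = i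

namespace SPQ

/-- A critical S-node: it has exactly two children and both children's pertinent
graphs contain the edge between their own terminals. -/
def IsCriticalS {V : Type} (μ : SPQ V) : Prop :=
  μ.isS ∧ μ.children.length = 2 ∧ ∀ c ∈ μ.children, SPQ.hasTermEdge c

/-- A bad P-node: its pertinent graph contains the edge between its terminals and it
has exactly two critical S-node children. -/
def IsBadP {V : Type} (μ : SPQ V) : Prop :=
  μ.isP ∧ μ.hasTermEdge ∧ ExactlyTwoOn SPQ.IsCriticalS μ.children

/-- An almost-bad P-node: its pertinent graph contains the edge between its terminals
and it has exactly one critical S-node child. -/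
def IsAlmostBadP {V : Type} (μ : SPQ V) : Prop :=
  μ.isP ∧ μ.hasTermEdge ∧ ExactlyOneOn SPQ.IsCriticalS μ.children

/-- A forbidden P-node: its pertinent graph contains the edge between its terminals
and it has more than two critical S-node children. -/
def IsForbiddenP {V : Type} (μ : SPQ V) : Prop :=
  μ.isP ∧ μ.hasTermEdge ∧ ¬ AtMostTwoOn SPQ.IsCriticalS μ.children

/-- A good P-node: one that is neither almost bad, nor bad, nor forbidden. -/
def IsGoodP {V : Type} (μ : SPQ V) : Prop :=
  μ.isP ∧ ¬ μ.IsAlmostBadP ∧ ¬ μ.IsBadP ∧ ¬ μ.IsForbiddenP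

/-- Type A S-node. -/
def IsTypeA {V : Type} (μ : SPQ V) : Prop :=
  μ.isS ∧ (2 < μ.children.length ∨
    (μ.children.length = 2 ∧ ∃ c ∈ μ.children, ¬ SPQ.hasTermEdge c))

/-- Type B S-node. -/
def IsTypeB {V : Type} (μ : SPQ V) : Prop :=
  μ.isS ∧ μ.children.length = 2 ∧ (∀ c ∈ μ.children, SPQ.hasTermEdge c) ∧
    ∃ c ∈ μ.children, SPQ.IsBadP c

/-- Type C S-node. -/
def IsTypeC {V : Type} (μ : SPQ V) : Prop :=
  μ.isS ∧ μ.children.length = 2 ∧ (∀ c ∈ μ.children, SPQ.hasTermEdge c) ∧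
    ∀ c ∈ μ.children, ¬ SPQ.IsBadP c

end SPQ

/-- The series-parallel graph obtained from the two-terminal series-parallel graph of
the SPQ tree `τ` by adding the reference edge between its terminals. -/
def spGraph {V : Type} (τ : SPQ V) : SimpleGraph V :=
  τ.pertinentGraph ⊔ SimpleGraph.fromEdgeSet {s(τ.src, τ.tgt)}

/-- `H` is a two-terminal series-parallel graph with vertex set `A`, source `s` and
target `t`: it is the pertinent graph of some well-formed SPQ tree. -/
def IsTTSPWith {V : Type} (H : SimpleGraph V) (A : Set V) (s t : V) : Prop :=
  ∃ μ : SPQ V, SPQ.WF μ ∧ μ.src = s ∧ μ.tgt = t ∧ μ.vertSet = A ∧ μ.pertinentGraph = H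

section Aux
set_option linter.unusedVariables false

mutual
theorem SPQ.adj_mem {V : Type} : ∀ (μ : SPQ V) (u v : V),
    μ.adjRel u v → u ∈ μ.vertSet ∧ v ∈ μ.vertSet
  | .Q s t, u, v, h => by
      simp [SPQ.adjRel] at h
      simp [SPQ.vertSet, h.1, h.2]
  | .S s t cs, u, v, h => by
      have := SPQList.adjL_mem cs u v h
      simp [SPQ.vertSet]; tauto
  | .P s t cs, u, v, h => by
      have := SPQList.adjL_mem cs u v h
      simp [SPQ.vertSet]; tauto
theorem SPQList.adjL_mem {V : Type} : ∀ (cs : SPQList V) (u v : V),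
    SPQList.adjRelL cs u v → u ∈ SPQList.vertSetL cs ∧ v ∈ SPQList.vertSetL cs
  | .cons c cs, u, v, h => by
      simp only [SPQList.adjRelL] at h
      rcases h with h | h
      · have := SPQ.adj_mem c u v h
        simp [SPQList.vertSetL]; tauto
      · have := SPQList.adjL_mem cs u v h
        simp [SPQList.vertSetL]; tauto
end

theorem SPQ.memTree_refl {V : Type} (μ : SPQ V) : SPQ.MemTree μ μ := by
  cases μ <;> simp [SPQ.MemTree]

theorem SPQList.mem_memTreeL {V : Type} : ∀ (cs : SPQList V) (c : SPQ V),
    c ∈ cs.toList → SPQList.MemTreeL c cs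
  | .nil, c, h => by simp [SPQList.toList] at h
  | .cons d ds, c, h => by
      simp only [SPQList.toList, List.mem_cons] at h
      simp only [SPQList.MemTreeL]
      rcases h with h | h
      · exact Or.inl (h ▸ SPQ.memTree_refl c)
      · exact Or.inr (SPQList.mem_memTreeL ds c h)

theorem SPQ.memTree_of_child {V : Type} {μ c : SPQ V} (h : c ∈ μ.children) :
    SPQ.MemTree c μ := by
  cases μ with
  | Q s t => simp [SPQ.children] at h
  | S s t cs =>
      simp only [SPQ.MemTree]
      exact Or.inr (SPQList.mem_memTreeL cs c (by simpa [SPQ.children] using h))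
  | P s t cs =>
      simp only [SPQ.MemTree]
      exact Or.inr (SPQList.mem_memTreeL cs c (by simpa [SPQ.children] using h))

mutual
theorem SPQ.memTree_trans {V : Type} {a b : SPQ V} : ∀ (c : SPQ V),
    SPQ.MemTree a b → SPQ.MemTree b c → SPQ.MemTree a c
  | .Q s t, h1, h2 => by
      simp only [SPQ.MemTree] at h2; subst h2; exact h1
  | .S s t cs, h1, h2 => by
      rcases (by simpa only [SPQ.MemTree] using h2 :
          b = .S s t cs ∨ SPQList.MemTreeL b cs) with h2 | h2
      · subst h2; exact h1
      · simp only [SPQ.MemTree]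
        exact Or.inr (SPQList.memTreeL_trans cs h1 h2)
  | .P s t cs, h1, h2 => by
      rcases (by simpa only [SPQ.MemTree] using h2 :
          b = .P s t cs ∨ SPQList.MemTreeL b cs) with h2 | h2
      · subst h2; exact h1
      · simp only [SPQ.MemTree]
        exact Or.inr (SPQList.memTreeL_trans cs h1 h2)
theorem SPQList.memTreeL_trans {V : Type} {a b : SPQ V} : ∀ (cs : SPQList V),
    SPQ.MemTree a b → SPQList.MemTreeL b cs → SPQList.MemTreeL a cs
  | .nil, _, h2 => by simp [SPQList.MemTreeL] at h2
  | .cons c cs, h1, h2 => by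
      simp only [SPQList.MemTreeL] at h2 ⊢
      rcases h2 with h2 | h2
      · exact Or.inl (SPQ.memTree_trans c h1 h2)
      · exact Or.inr (SPQList.memTreeL_trans cs h1 h2)
end

mutual
theorem SPQ.memTree_adj {V : Type} {μ : SPQ V} {u v : V} : ∀ (τ : SPQ V),
    SPQ.MemTree μ τ → μ.adjRel u v → τ.adjRel u v
  | .Q s t, h, ha => by
      simp only [SPQ.MemTree] at h; subst h; exact ha
  | .S s t cs, h, ha => by
      rcases (by simpa only [SPQ.MemTree] using h :
          μ = .S s t cs ∨ SPQList.MemTreeL μ cs) with h | h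
      · subst h; exact ha
      · simp only [SPQ.adjRel]
        exact SPQList.memTreeL_adj cs h ha
  | .P s t cs, h, ha => by
      rcases (by simpa only [SPQ.MemTree] using h :
          μ = .P s t cs ∨ SPQList.MemTreeL μ cs) with h | h
      · subst h; exact ha
      · simp only [SPQ.adjRel]
        exact SPQList.memTreeL_adj cs h ha
theorem SPQList.memTreeL_adj {V : Type} {μ : SPQ V} {u v : V} : ∀ (cs : SPQList V),
    SPQList.MemTreeL μ cs → μ.adjRel u v → SPQList.adjRelL cs u v
  | .nil, h, _ => by simp [SPQList.MemTreeL] at h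
  | .cons c cs, h, ha => by
      simp only [SPQList.MemTreeL] at h
      simp only [SPQList.adjRelL]
      rcases h with h | h
      · exact Or.inl (SPQ.memTree_adj c h ha)
      · exact Or.inr (SPQList.memTreeL_adj cs h ha)
end

mutual
theorem SPQ.memTree_vert {V : Type} {μ : SPQ V} : ∀ (τ : SPQ V),
    SPQ.MemTree μ τ → μ.vertSet ⊆ τ.vertSet
  | .Q s t, h => by simp only [SPQ.MemTree] at h; subst h; exact fun x hx => hx
  | .S s t cs, h => by
      rcases (by simpa only [SPQ.MemTree] using h :
          μ = .S s t cs ∨ SPQList.MemTreeL μ cs) with h | h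
      · subst h; exact fun x hx => hx
      · intro x hx
        simp only [SPQ.vertSet]
        exact Or.inr (SPQList.memTreeL_vert cs h hx)
  | .P s t cs, h => by
      rcases (by simpa only [SPQ.MemTree] using h :
          μ = .P s t cs ∨ SPQList.MemTreeL μ cs) with h | h
      · subst h; exact fun x hx => hx
      · intro x hx
        simp only [SPQ.vertSet]
        exact Or.inr (SPQList.memTreeL_vert cs h hx)
theorem SPQList.memTreeL_vert {V : Type} {μ : SPQ V} : ∀ (cs : SPQList V),
    SPQList.MemTreeL μ cs → μ.vertSet ⊆ SPQList.vertSetL cs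
  | .nil, h => by simp [SPQList.MemTreeL] at h
  | .cons c cs, h => by
      simp only [SPQList.MemTreeL] at h
      intro x hx
      simp only [SPQList.vertSetL]
      rcases h with h | h
      · exact Or.inl (SPQ.memTree_vert c h hx)
      · exact Or.inr (SPQList.memTreeL_vert cs h hx)
end

mutual
theorem SPQ.memTree_wf {V : Type} {μ : SPQ V} : ∀ (τ : SPQ V),
    SPQ.WF τ → SPQ.MemTree μ τ → SPQ.WF μ
  | .Q s t, hw, h => by simp only [SPQ.MemTree] at h; subst h; exact hw
  | .S s t cs, hw, h => by
      rcases (by simpa only [SPQ.MemTree] using h :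
          μ = .S s t cs ∨ SPQList.MemTreeL μ cs) with h | h
      · subst h; exact hw
      · have hw' : SPQList.WFL cs := by
          simp only [SPQ.WF] at hw; exact hw.2.2.1
        exact SPQList.memTreeL_wf cs hw' h
  | .P s t cs, hw, h => by
      rcases (by simpa only [SPQ.MemTree] using h :
          μ = .P s t cs ∨ SPQList.MemTreeL μ cs) with h | h
      · subst h; exact hw
      · have hw' : SPQList.WFL cs := by
          simp only [SPQ.WF] at hw; exact hw.2.2.1
        exact SPQList.memTreeL_wf cs hw' h
theorem SPQList.memTreeL_wf {V : Type} {μ : SPQ V} : ∀ (cs : SPQList V),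
    SPQList.WFL cs → SPQList.MemTreeL μ cs → SPQ.WF μ
  | .nil, _, h => by simp [SPQList.MemTreeL] at h
  | .cons c cs, hw, h => by
      simp only [SPQList.WFL] at hw
      simp only [SPQList.MemTreeL] at h
      rcases h with h | h
      · exact SPQ.memTree_wf c hw.1 h
      · exact SPQList.memTreeL_wf cs hw.2 h
end

theorem SPQ.pert_mono {V : Type} {μ ν : SPQ V} (h : SPQ.MemTree ν μ) {u v : V}
    (ha : ν.pertinentGraph.Adj u v) : μ.pertinentGraph.Adj u v :=
  show u ≠ v ∧ (μ.adjRel u v ∨ μ.adjRel v u) from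
  ⟨ha.1, ha.2.imp (SPQ.memTree_adj μ h) (SPQ.memTree_adj μ h)⟩

theorem spGraph_adj {V : Type} {τ μ : SPQ V} (h : SPQ.MemTree μ τ) {u v : V}
    (ha : μ.pertinentGraph.Adj u v) : (spGraph τ).Adj u v :=
  (SimpleGraph.sup_adj _ _ _ _).mpr (Or.inl (SPQ.pert_mono h ha))

theorem SPQ.src_mem {V : Type} (μ : SPQ V) : μ.src ∈ μ.vertSet := by
  cases μ <;> simp [SPQ.src, SPQ.vertSet]

theorem SPQ.tgt_mem {V : Type} (μ : SPQ V) : μ.tgt ∈ μ.vertSet := by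
  cases μ <;> simp [SPQ.tgt, SPQ.vertSet]

theorem SPQList.eq_two {V : Type} {cs : SPQList V} (h : cs.toList.length = 2) :
    ∃ c1 c2, cs = .cons c1 (.cons c2 .nil) := by
  cases cs with
  | nil => simp [SPQList.toList] at h
  | cons a as =>
    cases as with
    | nil => simp [SPQList.toList] at h
    | cons b bs =>
      cases bs with
      | nil => exact ⟨a, b, rfl⟩
      | cons c cs' => simp [SPQList.toList] at h

theorem SPQ.S2_struct {V : Type} {σ : SPQ V} (hS : σ.isS) (hwf : SPQ.WF σ)
    (hlen : σ.children.length = 2) :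
    ∃ c1 c2, σ.children = [c1, c2] ∧ c1.tgt = σ.tgt ∧ c2.src = σ.src ∧
      c2.tgt = c1.src ∧ c1.vertSet ∩ c2.vertSet ⊆ {c1.src} := by
  cases σ with
  | Q s t => simp [SPQ.isS] at hS
  | P s t cs => simp [SPQ.isS] at hS
  | S s t cs =>
    simp only [SPQ.children] at hlen ⊢
    obtain ⟨c1, c2, rfl⟩ := SPQList.eq_two hlen
    simp only [SPQ.WF] at hwf
    obtain ⟨-, -, -, -, hchain, hpw⟩ := hwf
    have hl : SPQList.toList (SPQList.cons c1 (SPQList.cons c2 .nil)) = [c1, c2] := by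
      simp [SPQList.toList]
    rw [hl] at hchain hpw
    simp only [SPQ.chainFrom] at hchain
    have hpw01 := hpw ⟨0, by simp⟩ ⟨1, by simp⟩ (by simp)
    simp at hpw01
    refine ⟨c1, c2, hl, ?_, ?_, ?_, ?_⟩
    · simpa [SPQ.tgt] using hchain.1
    · simpa [SPQ.src] using hchain.2.2
    · exact hchain.2.1
    · exact fun x hx => hpw01 x hx.1 hx.2

theorem SPQ.critical_struct {V : Type} {σ : SPQ V} (hwf : SPQ.WF σ)
    (hc : σ.IsCriticalS) :
    ∃ x, x ∈ σ.vertSet ∧ x ≠ σ.src ∧ x ≠ σ.tgt ∧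
      σ.pertinentGraph.Adj σ.src x ∧ σ.pertinentGraph.Adj x σ.tgt := by
  obtain ⟨hS, hlen, hterm⟩ := hc
  obtain ⟨c1, c2, hch, h1t, h2s, h21, hint⟩ := SPQ.S2_struct hS hwf hlen
  have hm1 : c1 ∈ σ.children := by rw [hch]; simp
  have hm2 : c2 ∈ σ.children := by rw [hch]; simp
  have ht1 : c1.pertinentGraph.Adj c1.src c1.tgt := hterm c1 hm1
  have ht2 : c2.pertinentGraph.Adj c2.src c2.tgt := hterm c2 hm2
  rw [h1t] at ht1
  rw [h2s, h21] at ht2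
  exact ⟨c1.src, SPQ.memTree_vert σ (SPQ.memTree_of_child hm1) (SPQ.src_mem c1),
    ht2.ne', ht1.ne, SPQ.pert_mono (SPQ.memTree_of_child hm2) ht2,
    SPQ.pert_mono (SPQ.memTree_of_child hm1) ht1⟩

instance : DecidableRel K113.Adj := fun u v =>
  inferInstanceAs (Decidable (u ≠ v ∧ ((u : ℕ) < 2 ∨ (v : ℕ) < 2)))

theorem K113_of {V : Type} (G : SimpleGraph V) (a b w1 w2 w3 : V)
    (hab : G.Adj a b) (h1 : G.Adj a w1) (h2 : G.Adj a w2) (h3 : G.Adj a w3)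
    (k1 : G.Adj b w1) (k2 : G.Adj b w2) (k3 : G.Adj b w3)
    (d12 : w1 ≠ w2) (d13 : w1 ≠ w3) (d23 : w2 ≠ w3) :
    ¬ K113Free G := by
  intro hfree
  apply hfree
  refine ⟨![a, b, w1, w2, w3], ?_, ?_⟩
  · have e0 := hab.ne
    have e1 := h1.ne; have e2 := h2.ne; have e3 := h3.ne
    have f1 := k1.ne; have f2 := k2.ne; have f3 := k3.ne
    intro u v huv
    fin_cases u <;> fin_cases v <;> simp_all
  · intro u v huv
    fin_cases u <;> fin_cases v <;>
      first
        | exact absurd huv (by decide)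
        | exact hab | exact hab.symm
        | exact h1 | exact h1.symm | exact h2 | exact h2.symm
        | exact h3 | exact h3.symm
        | exact k1 | exact k1.symm | exact k2 | exact k2.symm
        | exact k3 | exact k3.symm

theorem SPQ.badP_struct {V : Type} {π : SPQ V} (hwf : SPQ.WF π) (hbad : SPQ.IsBadP π) :
    ∃ y1 y2, y1 ∈ π.vertSet ∧ y2 ∈ π.vertSet ∧ y1 ≠ y2 ∧
      y1 ≠ π.src ∧ y1 ≠ π.tgt ∧ y2 ≠ π.src ∧ y2 ≠ π.tgt ∧
      π.pertinentGraph.Adj π.src y1 ∧ π.pertinentGraph.Adj y1 π.tgt ∧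
      π.pertinentGraph.Adj π.src y2 ∧ π.pertinentGraph.Adj y2 π.tgt := by
  obtain ⟨hP, -, htwo⟩ := hbad
  cases π with
  | Q s t => simp [SPQ.isP] at hP
  | S s t cs => simp [SPQ.isP] at hP
  | P s t cs =>
    have hwfP := hwf
    simp only [SPQ.WF] at hwfP
    obtain ⟨hst, -, -, -, hterms, hints, -⟩ := hwfP
    obtain ⟨i, j, hij, hi, hj, -⟩ := htwo
    have key : ∀ m : Fin ((SPQ.P s t cs).children).length,
        SPQ.IsCriticalS (((SPQ.P s t cs).children).get m) →
        ∃ y, y ∈ ((((SPQ.P s t cs).children).get m)).vertSet ∧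
          y ≠ s ∧ y ≠ t ∧ (SPQ.P s t cs).pertinentGraph.Adj s y ∧
          (SPQ.P s t cs).pertinentGraph.Adj y t := by
      intro m hm
      have hgm : ((SPQ.P s t cs).children).get m ∈ (SPQ.P s t cs).children :=
        List.get_mem _ _
      have hmemg : SPQ.MemTree (((SPQ.P s t cs).children).get m) (SPQ.P s t cs) :=
        SPQ.memTree_of_child hgm
      have hwg := SPQ.memTree_wf (SPQ.P s t cs) hwf hmemg
      obtain ⟨y, hyv, hys, hyt, e1, e2⟩ := SPQ.critical_struct hwg hm
      obtain ⟨hsr, htg⟩ := hterms _ hgm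
      rw [hsr] at hys e1
      rw [htg] at hyt e2
      exact ⟨y, hyv, hys, hyt, SPQ.pert_mono hmemg e1, SPQ.pert_mono hmemg e2⟩
    obtain ⟨y1, hv1, hs1, ht1, a1, b1⟩ := key i hi
    obtain ⟨y2, hv2, hs2, ht2, a2, b2⟩ := key j hj
    have hne12 : y1 ≠ y2 := by
      intro h
      have hsub : (((SPQ.P s t cs).children).get i).vertSet ∩
          (((SPQ.P s t cs).children).get j).vertSet ⊆ ({s, t} : Set V) := by
        rcases lt_or_gt_of_ne (fun hh => hij (Fin.ext hh)) with hlt | hgt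
        · exact hints i j hlt
        · exact fun x hx => hints j i hgt ⟨hx.2, hx.1⟩
      rcases hsub ⟨hv1, h ▸ hv2⟩ with h' | h'
      · exact hs1 h'
      · exact ht1 h'
    have hvm1 : y1 ∈ (SPQ.P s t cs).vertSet :=
      SPQ.memTree_vert _ (SPQ.memTree_of_child (List.get_mem _ _)) hv1
    have hvm2 : y2 ∈ (SPQ.P s t cs).vertSet :=
      SPQ.memTree_vert _ (SPQ.memTree_of_child (List.get_mem _ _)) hv2
    exact ⟨y1, y2, hvm1, hvm2, hne12, hs1, ht1, hs2, ht2, a1, b1, a2, b2⟩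

end Aux

/-- Observation 2: in the SPQ-tree of a finite `K_{1,1,3}`-free
series-parallel graph, if `μ` is a P-node whose pertinent graph contains the edge
between its terminals, then no child of `μ` is an S-node of Type B and at most two
children of `μ` are S-nodes of Type C. -/
theorem Pnode_with_term_edge_children {V : Type} [Fintype V] (τ : SPQ V)
    (hwf : SPQ.WF τ) (href : ¬ τ.hasTermEdge)
    (hfree : K113Free (spGraph τ)) :
    ∀ μ : SPQ V, SPQ.MemTree μ τ → μ.isP → μ.hasTermEdge →
      (∀ c ∈ μ.children, ¬ SPQ.IsTypeB c) ∧
      AtMostTwoOn SPQ.IsTypeC μ.children := by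
  intro μ hmem hP hterm
  cases μ with
  | Q s t => simp [SPQ.isP] at hP
  | S s t ds => simp [SPQ.isP] at hP
  | P s t ds =>
    have hwfμ := SPQ.memTree_wf τ hwf hmem
    have hwfμ' := hwfμ
    simp only [SPQ.WF] at hwfμ'
    obtain ⟨hst, hlen2, hwfl, hSQ, hterms, hints, hQuniq⟩ := hwfμ'
    have hedgest : (spGraph τ).Adj s t := by
      refine spGraph_adj hmem ?_
      have := hterm
      simpa only [SPQ.hasTermEdge, SPQ.src, SPQ.tgt] using this
    -- distinctness helper
    have hdis : ∀ i j : Fin ds.toList.length, i ≠ j →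
        (ds.toList.get i).vertSet ∩ (ds.toList.get j).vertSet ⊆ ({s, t} : Set V) := by
      intro i j hij
      rcases lt_or_gt_of_ne (fun hh => hij (Fin.ext hh)) with hlt | hgt
      · exact hints i j hlt
      · exact fun x hx => hints j i hgt ⟨hx.2, hx.1⟩
    -- membership in τ of children
    have hmemc : ∀ c ∈ ds.toList, SPQ.MemTree c τ := by
      intro c hc
      exact SPQ.memTree_trans τ
        (SPQ.memTree_of_child (show c ∈ (SPQ.P s t ds).children from hc)) hmem
    -- a critical child yields a private common neighbor of s and t
    have key : ∀ c ∈ ds.toList, SPQ.IsCriticalS c →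
        ∃ x, x ∈ c.vertSet ∧ x ≠ s ∧ x ≠ t ∧
          (spGraph τ).Adj s x ∧ (spGraph τ).Adj x t := by
      intro c hc hcrit
      have hmc := hmemc c hc
      have hwc := SPQ.memTree_wf τ hwf hmc
      obtain ⟨x, hxv, hxs, hxt, e1, e2⟩ := SPQ.critical_struct hwc hcrit
      obtain ⟨hsr, htg⟩ := hterms c hc
      rw [hsr] at hxs e1
      rw [htg] at hxt e2
      exact ⟨x, hxv, hxs, hxt, spGraph_adj hmc e1, spGraph_adj hmc e2⟩
    constructor
    · -- no Type B child
      intro c hc hB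
      have hmc := hmemc c hc
      have hwc := SPQ.memTree_wf τ hwf hmc
      obtain ⟨hsr, htg⟩ := hterms c hc
      obtain ⟨hcS, hclen, hcterm, π, hπmem, hπbad⟩ := hB
      obtain ⟨c1, c2, hch12, h1t, h2s, h21, hint12⟩ := SPQ.S2_struct hcS hwc hclen
      rw [hsr] at h2s
      rw [htg] at h1t
      have hm1 : c1 ∈ c.children := by rw [hch12]; simp
      have hm2 : c2 ∈ c.children := by rw [hch12]; simp
      have hmem1 : SPQ.MemTree c1 τ := SPQ.memTree_trans τ (SPQ.memTree_of_child hm1) hmc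
      have hmem2 : SPQ.MemTree c2 τ := SPQ.memTree_trans τ (SPQ.memTree_of_child hm2) hmc
      have hte1 : c1.pertinentGraph.Adj c1.src t := by
        have h := hcterm c1 hm1
        rw [show SPQ.hasTermEdge c1 = c1.pertinentGraph.Adj c1.src c1.tgt from rfl, h1t] at h
        exact h
      have hte2 : c2.pertinentGraph.Adj s c1.src := by
        have h := hcterm c2 hm2
        rw [show SPQ.hasTermEdge c2 = c2.pertinentGraph.Adj c2.src c2.tgt from rfl,
          h2s, h21] at h
        exact h
      have ext : (spGraph τ).Adj c1.src t := spGraph_adj hmem1 hte1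
      have esx : (spGraph τ).Adj s c1.src := spGraph_adj hmem2 hte2
      have hsnot1 : s ∉ c1.vertSet := by
        intro hsv
        have hs2 : s ∈ c2.vertSet := by rw [← h2s]; exact SPQ.src_mem c2
        exact hte2.ne (hint12 ⟨hsv, hs2⟩)
      have htnot2 : t ∉ c2.vertSet := by
        intro htv
        have ht1' : t ∈ c1.vertSet := by rw [← h1t]; exact SPQ.tgt_mem c1
        exact hte1.ne (hint12 ⟨ht1', htv⟩).symm
      have hπ12 : π = c1 ∨ π = c2 := by
        rw [hch12] at hπmem
        simpa using hπmem
      rcases hπ12 with heq | heq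
      · -- π = c1, terminals (c1.src, t)
        subst heq
        have hwπ := SPQ.memTree_wf τ hwf hmem1
        obtain ⟨y1, y2, hv1, hv2, hne12, hs1, ht1', hs2', ht2', a1, b1, a2, b2⟩ :=
          SPQ.badP_struct hwπ hπbad
        rw [h1t] at ht1' ht2' b1 b2
        have hy1s : y1 ≠ s := fun h => hsnot1 (h ▸ hv1)
        have hy2s : y2 ≠ s := fun h => hsnot1 (h ▸ hv2)
        exact K113_of (spGraph τ) π.src t s y1 y2
          ext esx.symm (spGraph_adj hmem1 a1) (spGraph_adj hmem1 a2)
          hedgest.symm (spGraph_adj hmem1 b1).symm (spGraph_adj hmem1 b2).symm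
          (Ne.symm hy1s) (Ne.symm hy2s) hne12 hfree
      · -- π = c2, terminals (s, c1.src)
        subst heq
        have hwπ := SPQ.memTree_wf τ hwf hmem2
        obtain ⟨y1, y2, hv1, hv2, hne12, hs1, ht1', hs2', ht2', a1, b1, a2, b2⟩ :=
          SPQ.badP_struct hwπ hπbad
        rw [h2s] at hs1 hs2' a1 a2
        rw [h21] at ht1' ht2' b1 b2
        have hy1t : y1 ≠ t := fun h => htnot2 (h ▸ hv1)
        have hy2t : y2 ≠ t := fun h => htnot2 (h ▸ hv2)
        exact K113_of (spGraph τ) s c1.src t y1 y2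
          esx hedgest (spGraph_adj hmem2 a1) (spGraph_adj hmem2 a2)
          ext (spGraph_adj hmem2 b1).symm (spGraph_adj hmem2 b2).symm
          (Ne.symm hy1t) (Ne.symm hy2t) hne12 hfree
    · -- at most two Type C children
      show AtMostTwoOn SPQ.IsTypeC ds.toList
      intro i j k hi hj hk
      by_contra hcon
      push_neg at hcon
      obtain ⟨hij, hik, hjk⟩ := hcon
      have crit : ∀ m : Fin ds.toList.length, SPQ.IsTypeC (ds.toList.get m) →
          SPQ.IsCriticalS (ds.toList.get m) := fun m hm => ⟨hm.1, hm.2.1, hm.2.2.1⟩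
      obtain ⟨x1, hv1, hs1, ht1, a1, b1⟩ := key _ (List.get_mem _ _) (crit i hi)
      obtain ⟨x2, hv2, hs2, ht2, a2, b2⟩ := key _ (List.get_mem _ _) (crit j hj)
      obtain ⟨x3, hv3, hs3, ht3, a3, b3⟩ := key _ (List.get_mem _ _) (crit k hk)
      have d12 : x1 ≠ x2 := fun h => by
        rcases hdis i j hij ⟨hv1, h ▸ hv2⟩ with h' | h'
        · exact hs1 h'
        · exact ht1 h'
      have d13 : x1 ≠ x3 := fun h => by
        rcases hdis i k hik ⟨hv1, h ▸ hv3⟩ with h' | h'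
        · exact hs1 h'
        · exact ht1 h'
      have d23 : x2 ≠ x3 := fun h => by
        rcases hdis j k hjk ⟨hv2, h ▸ hv3⟩ with h' | h'
        · exact hs2 h'
        · exact ht2 h'
      exact K113_of (spGraph τ) s t x1 x2 x3 hedgest a1 a2 a3
        b1.symm b2.symm b3.symm d12 d13 d23 hfree
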